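/- Let Q be the modularity metric. For every ε > 0, the constant function c(n) = ⌈1/ε⌉ witnesses that modularity is a polynomial clique metric: for all n ≥ 2 and any positive edge weights on K_n, the modularity of c(n) disjoint identical copies of the weighted K_n is at least 1 − ε. -/

import Mathlib

/-- Weight function of `c` disjoint identical copies of a weighted complete graph
`K_n` with edge weights `w`. -/
noncomputable def copiesW (n c : ℕ) (w : Fin n → Fin n → ℝ) (x y : Fin c × Fin n) : ℝ :=
  if x.1 = y.1 then w x.2 y.2 else 0

/-- The modularity value of a vertex partition `δ` of `K_n^c` (with weights `w` on
each copy): `Σ_{C∈δ} [W(C)/W − (D(C)/D)²]`. -/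
noncomputable def modQ (n c : ℕ) (w : Fin n → Fin n → ℝ)
    (δ : Finpartition (Finset.univ : Finset (Fin c × Fin n))) : ℝ :=
  ∑ C ∈ δ.parts,
    ((∑ x ∈ C, ∑ y ∈ C, copiesW n c w x y) /
        (∑ x : Fin c × Fin n, ∑ y : Fin c × Fin n, copiesW n c w x y) -
      ((∑ x ∈ C, ∑ y : Fin c × Fin n, copiesW n c w x y) /
          (∑ x : Fin c × Fin n, ∑ y : Fin c × Fin n, copiesW n c w x y)) ^ 2)

open Finset

/-- For every `ε > 0`, the constant `c = ⌈1/ε⌉` witnesses that modularity is a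
polynomial clique metric: for all `n ≥ 2` and any positive (symmetric) edge weights
on `K_n`, the modularity (max over partitions) of `⌈1/ε⌉` disjoint identical copies
of the weighted `K_n` is at least `1 − ε`. -/
theorem stmt_19 (ε : ℝ) (hε : 0 < ε) (n : ℕ) (hn : 2 ≤ n)
    (w : Fin n → Fin n → ℝ) (hsymm : ∀ x y, w x y = w y x)
    (hdiag : ∀ x, w x x = 0) (hpos : ∀ x y, x ≠ y → 0 < w x y) :
    1 - ε ≤
      sSup {q : ℝ |
        ∃ δ : Finpartition (Finset.univ : Finset (Fin (⌈1 / ε⌉₊) × Fin n)),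
          q = modQ n (⌈1 / ε⌉₊) w δ} := by
  classical
  set c := ⌈1 / ε⌉₊ with hcdef
  have hcpos : 0 < c := Nat.ceil_pos.2 (by positivity)
  have hnpos : 0 < n := by omega
  set S := ∑ a : Fin n, ∑ b : Fin n, w a b with hSdef
  have hwnn : ∀ a b, 0 ≤ w a b := by
    intro a b
    rcases eq_or_ne a b with h | h
    · simp [h, hdiag]
    · exact (hpos a b h).le
  have hSpos : 0 < S := by
    have h01 : (⟨0, by omega⟩ : Fin n) ≠ ⟨1, by omega⟩ := by simp [Fin.ext_iff]
    have h1 : w ⟨0, by omega⟩ ⟨1, by omega⟩ ≤ ∑ b : Fin n, w ⟨0, by omega⟩ b :=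
      Finset.single_le_sum (fun b _ => hwnn _ b) (mem_univ _)
    have h2 : (∑ b : Fin n, w ⟨0, by omega⟩ b) ≤ S :=
      Finset.single_le_sum (fun a _ => Finset.sum_nonneg fun b _ => hwnn a b) (mem_univ _)
    exact lt_of_lt_of_le (hpos _ _ h01) (h1.trans h2)
  -- the copies partition parts: part sums
  have hA : ∀ i : Fin c,
      (∑ x ∈ ({i} ×ˢ (univ : Finset (Fin n))), ∑ y ∈ ({i} ×ˢ (univ : Finset (Fin n))),
        copiesW n c w x y) = S := by
    intro i
    simp [Finset.sum_product, copiesW, hSdef]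
  have hB : ∀ i : Fin c,
      (∑ x ∈ ({i} ×ˢ (univ : Finset (Fin n))), ∑ y : Fin c × Fin n, copiesW n c w x y) = S := by
    intro i
    simp [Finset.sum_product, Fintype.sum_prod_type, copiesW, Finset.sum_ite_eq, hSdef]
  have hT : (∑ x : Fin c × Fin n, ∑ y : Fin c × Fin n, copiesW n c w x y) = c * S := by
    simp [Fintype.sum_prod_type, copiesW, Finset.sum_ite_eq, hSdef, mul_comm]
  -- the partition into copies
  have hinj : Function.Injective (fun i : Fin c => ({i} ×ˢ (univ : Finset (Fin n)))) := by
    intro i j h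
    have h' : ({i} ×ˢ (univ : Finset (Fin n))) = {j} ×ˢ (univ : Finset (Fin n)) := h
    have hi : (i, (⟨0, hnpos⟩ : Fin n)) ∈ ({i} ×ˢ (univ : Finset (Fin n))) := by simp
    rw [h'] at hi
    rw [Finset.mem_product] at hi
    simpa using hi.1
  let P : Finpartition (univ : Finset (Fin c × Fin n)) :=
    { parts := (univ : Finset (Fin c)).image fun i => {i} ×ˢ (univ : Finset (Fin n))
      supIndep := by
        rw [Finset.supIndep_iff_pairwiseDisjoint]
        rintro s hs t ht hne
        obtain ⟨i, -, rfl⟩ := Finset.mem_image.mp (Finset.mem_coe.mp hs)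
        obtain ⟨j, -, rfl⟩ := Finset.mem_image.mp (Finset.mem_coe.mp ht)
        have hij : i ≠ j := fun h => hne (by rw [h])
        simp only [Function.onFun, id_eq]
        rw [Finset.disjoint_left]
        rintro ⟨k, b⟩ hk hk'
        simp only [Finset.mem_product, Finset.mem_singleton] at hk hk'
        exact hij (hk.1.symm.trans hk'.1)
      sup_parts := by
        ext x
        simp only [Finset.sup_image, Function.id_comp, Finset.mem_sup, Finset.mem_univ,
          Finset.mem_product, Finset.mem_singleton, true_and, iff_true]
        exact ⟨x.1, by simp⟩
      bot_notMem := by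
        simp only [bot_eq_empty, Finset.mem_image, Finset.mem_univ, true_and, not_exists]
        intro i h
        have hi : (i, (⟨0, hnpos⟩ : Fin n)) ∈ ({i} ×ˢ (univ : Finset (Fin n))) := by simp
        rw [h] at hi
        exact absurd hi (Finset.notMem_empty _) }
  have hPQ : modQ n c w P = 1 - 1 / (c : ℝ) := by
    have hc0 : ((c : ℝ)) ≠ 0 := Nat.cast_ne_zero.2 hcpos.ne'
    unfold modQ
    show (∑ C ∈ (univ : Finset (Fin c)).image fun i => {i} ×ˢ (univ : Finset (Fin n)), _) = _
    rw [Finset.sum_image (fun i _ j _ h => hinj h)]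
    have : ∀ i : Fin c,
        ((∑ x ∈ ({i} ×ˢ (univ : Finset (Fin n))), ∑ y ∈ ({i} ×ˢ (univ : Finset (Fin n))),
            copiesW n c w x y) /
          (∑ x : Fin c × Fin n, ∑ y : Fin c × Fin n, copiesW n c w x y) -
         ((∑ x ∈ ({i} ×ˢ (univ : Finset (Fin n))), ∑ y : Fin c × Fin n, copiesW n c w x y) /
          (∑ x : Fin c × Fin n, ∑ y : Fin c × Fin n, copiesW n c w x y)) ^ 2)
        = 1 / (c : ℝ) - (1 / (c : ℝ)) ^ 2 := by
      intro i
      rw [hA i, hB i, hT]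
      rw [div_mul_eq_div_div_swap]
      rw [div_self hSpos.ne']
    rw [Finset.sum_congr rfl fun i _ => this i]
    rw [Finset.sum_const, Finset.card_univ, Fintype.card_fin, nsmul_eq_mul]
    field_simp
  have hbdd : BddAbove {q : ℝ | ∃ δ : Finpartition (univ : Finset (Fin c × Fin n)),
      q = modQ n c w δ} := by
    apply Set.Finite.bddAbove
    apply (Set.finite_range (modQ n c w)).subset
    rintro q ⟨δ, rfl⟩
    exact ⟨δ, rfl⟩
  have hmem : modQ n c w P ∈ {q : ℝ | ∃ δ : Finpartition (univ : Finset (Fin c × Fin n)),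
      q = modQ n c w δ} := ⟨P, rfl⟩
  refine le_trans ?_ (le_csSup hbdd hmem)
  rw [hPQ]
  have hle : 1 / ε ≤ (c : ℝ) := Nat.le_ceil _
  have : 1 / (c : ℝ) ≤ ε := by
    rw [div_le_iff₀ (by exact_mod_cast hcpos)]
    rw [div_le_iff₀ hε] at hle
    linarith
  linarith
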